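/- Let (A, ≤, |·|) be a normed well-quasi-order with proper norm, g a control function, and n ∈ ℕ. Then there is a maximum length among all finite (g,n)-controlled bad sequences over A; that is, the length function L_{A,g}(n) = sup of lengths of (g,n)-controlled bad sequences is finite. -/
import Mathlib


/-- Length theorem (finiteness): in a normed wqo with proper norm, for a control
function g and n ∈ ℕ, there is a maximum length among all finite
(g,n)-controlled bad sequences. -/
theorem controlled_bad_sequences_bounded_length
    (A : Type) (le : A → A → Prop) (norm : A → ℕ)
    (hrefl : ∀ a, le a a)
    (htrans : ∀ a b c, le a b → le b c → le a c)
    (hwqo : ∀ f : ℕ → A, ∃ i j : ℕ, i < j ∧ le (f i) (f j))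
    (hproper : ∀ n : ℕ, {a : A | norm a ≤ n}.Finite)
    (g : ℕ → ℕ) (hmono : Monotone g) (hge : ∀ x, x ≤ g x) (n : ℕ) :
    ∃ L : ℕ, ∀ (m : ℕ) (a : Fin m → A),
      (∀ i : Fin m, norm (a i) ≤ g^[(i : ℕ)] n) →
      (∀ i j : Fin m, i < j → ¬ le (a i) (a j)) →
      m ≤ L := by
  by_contra hL
  push_neg at hL
  have hA : Nonempty A := by
    obtain ⟨m, a, -, -, hm⟩ := hL 0
    exact ⟨a ⟨0, by omega⟩⟩
  classical
  set Bad : (ℕ → A) → ℕ → Prop :=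
    fun f m => (∀ i < m, norm (f i) ≤ g^[i] n) ∧
      ∀ i j, i < j → j < m → ¬ le (f i) (f j) with hBad
  set Good : (ℕ → A) → ℕ → Prop :=
    fun f k => ∀ L, ∃ f' m, L ≤ m ∧ Bad f' m ∧ ∀ i < k, f' i = f i with hGood
  have hbase : ∀ f, Good f 0 := by
    intro f L
    obtain ⟨m, a, hc, hb, hm⟩ := hL L
    refine ⟨fun i => if h : i < m then a ⟨i, h⟩ else Classical.arbitrary A, m,
      by omega, ⟨?_, ?_⟩, by omega⟩
    · intro i hi; simp only [dif_pos hi]; exact hc ⟨i, hi⟩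
    · intro i j hij hj
      have hi : i < m := hij.trans hj
      simp only [dif_pos hi, dif_pos hj]
      exact hb ⟨i, hi⟩ ⟨j, hj⟩ hij
  have hstep : ∀ f k, Good f k → ∃ a, Good (Function.update f k a) (k + 1) := by
    intro f k hf
    by_contra hno
    push_neg at hno
    simp only [hGood, not_forall, not_exists, not_and] at hno
    choose Lb hLb using hno
    set S := (hproper (g^[k] n)).toFinset with hS
    obtain ⟨f', m, hm, hbad, hag⟩ := hf (max (S.sup Lb) (k + 1))
    have hkm : k < m := by
      have := le_max_right (S.sup Lb) (k + 1); omega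
    have hmem : f' k ∈ S := by
      rw [hS, Set.Finite.mem_toFinset]
      exact hbad.1 k hkm
    have hLm : Lb (f' k) ≤ m :=
      le_trans (le_trans (Finset.le_sup hmem) (le_max_left _ _)) hm
    obtain ⟨i, hi, hne⟩ := hLb (f' k) f' m hLm hbad
    apply hne
    rcases Nat.lt_succ_iff_lt_or_eq.mp hi with h | h
    · rw [Function.update_of_ne (by omega), hag i h]
    · subst h; rw [Function.update_self]
  let next : (ℕ → A) → ℕ → (ℕ → A) := fun f k =>
    if h : ∃ a, Good (Function.update f k a) (k + 1)
    then Function.update f k h.choose else f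
  let fs : ℕ → (ℕ → A) := fun k =>
    Nat.rec (fun _ => Classical.arbitrary A) (fun k fk => next fk k) k
  have hfs : ∀ k, fs (k + 1) = next (fs k) k := fun k => rfl
  have hgood : ∀ k, Good (fs k) k := by
    intro k; induction k with
    | zero => exact hbase _
    | succ k ih =>
      rw [hfs]
      have h := hstep _ k ih
      simp only [next, dif_pos h]
      exact h.choose_spec
  have hagr : ∀ k i, i ≠ k → fs (k + 1) i = fs k i := by
    intro k i hik
    rw [hfs]
    simp only [next]
    split
    · exact Function.update_of_ne hik _ _
    · rfl
  set F : ℕ → A := fun i => fs (i + 1) i with hF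
  have hFs : ∀ j i, i < j → fs j i = F i := by
    intro j
    induction j with
    | zero => omega
    | succ j ih =>
      intro i hi
      rcases Nat.lt_succ_iff_lt_or_eq.mp hi with h | h
      · rw [hagr j i (by omega), ih i h]
      · subst h; rfl
  obtain ⟨i, j, hij, hle⟩ := hwqo F
  obtain ⟨f', m, hm, hbad, hag⟩ := hgood (j + 1) (j + 1)
  have hfi : f' i = F i := by rw [hag i (by omega), hFs (j + 1) i (by omega)]
  have hfj : f' j = F j := by rw [hag j (by omega), hFs (j + 1) j (by omega)]
  exact hbad.2 i j hij (by omega) (hfi ▸ hfj ▸ hle)
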